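/- On a dynamic line graph (dandelion), for an honest node v, the probability of the event E_v(i,0) that v's successor is adversarial, the i nodes preceding v are honest, and the (i+1)-th predecessor is adversarial (i > 0) satisfies P(E_v(i,0)) ≤ (p + 1/n)² (1 − p + 2/n)^i, where the probability conditional on v's position is the product (np/(n−1))((np−1)/(n−2))·∏_{j=1}^{i}((ñ−j)/(n−2−j)) with ñ = (1−p)n honest of n total nodes. -/
import Mathlib


/-- Dynamic line graph: the hypergeometric product giving the conditional
probability of the event `E_v(i,0)` (adversarial successor, `i` honest
predecessors, adversarial `(i+1)`-th predecessor) is bounded by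
`(p + 1/n)²(1 − p + 2/n)^i`, where `a = np` is the number of adversaries. -/
theorem stmt_16 (n a i : ℕ) (p : ℝ) (hp : p = (a : ℝ) / (n : ℝ))
    (ha : a + 1 ≤ n) (hi : 1 ≤ i) (hia : i + a ≤ n) (hin : 2 * (i + 2) ≤ n) :
    ((a : ℝ) / ((n : ℝ) - 1)) * (((a : ℝ) - 1) / ((n : ℝ) - 2)) *
        ∏ j ∈ Finset.Icc 1 i, (((n : ℝ) - (a : ℝ) - (j : ℝ)) / ((n : ℝ) - 2 - (j : ℝ)))
      ≤ (p + 1 / (n : ℝ)) ^ 2 * (1 - p + 2 / (n : ℝ)) ^ i := by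
  have hn6 : (6 : ℕ) ≤ n := by omega
  have hN : (6 : ℝ) ≤ (n : ℝ) := by exact_mod_cast hn6
  have hN0 : (0 : ℝ) < (n : ℝ) := by linarith
  have hAn : (a : ℝ) + 1 ≤ (n : ℝ) := by exact_mod_cast ha
  have hian : (i : ℝ) + (a : ℝ) ≤ (n : ℝ) := by exact_mod_cast hia
  have hin' : 2 * ((i : ℝ) + 2) ≤ (n : ℝ) := by exact_mod_cast hin
  have hX : p + 1 / (n : ℝ) = ((a : ℝ) + 1) / (n : ℝ) := by
    rw [hp]; field_simp
  have hc : 1 - p + 2 / (n : ℝ) = ((n : ℝ) - (a : ℝ) + 2) / (n : ℝ) := by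
    rw [hp]; field_simp
  have hcn : 0 ≤ ((n : ℝ) - (a : ℝ) + 2) / (n : ℝ) :=
    div_nonneg (by linarith) hN0.le
  have hXn : 0 ≤ ((a : ℝ) + 1) / (n : ℝ) :=
    div_nonneg (by positivity) hN0.le
  rw [hX, hc]
  rcases Nat.lt_or_ge a 2 with h2 | h2
  · have hz : ((a : ℝ) / ((n : ℝ) - 1)) * (((a : ℝ) - 1) / ((n : ℝ) - 2)) = 0 := by
      interval_cases a <;> norm_num
    rw [hz, zero_mul]
    exact mul_nonneg (by positivity) (pow_nonneg hcn i)
  · have hA2 : (2 : ℝ) ≤ (a : ℝ) := by exact_mod_cast h2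
    have hf1 : (a : ℝ) / ((n : ℝ) - 1) ≤ ((a : ℝ) + 1) / (n : ℝ) := by
      rw [div_le_div_iff₀ (by linarith) hN0]; nlinarith
    have hf2 : ((a : ℝ) - 1) / ((n : ℝ) - 2) ≤ ((a : ℝ) + 1) / (n : ℝ) := by
      rw [div_le_div_iff₀ (by linarith) hN0]; nlinarith
    have hf2n : 0 ≤ ((a : ℝ) - 1) / ((n : ℝ) - 2) :=
      div_nonneg (by linarith) (by linarith)
    have hPn : 0 ≤ ∏ j ∈ Finset.Icc 1 i,
        (((n : ℝ) - (a : ℝ) - (j : ℝ)) / ((n : ℝ) - 2 - (j : ℝ))) := by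
      apply Finset.prod_nonneg
      intro j hj
      rw [Finset.mem_Icc] at hj
      have hj2 : (j : ℝ) ≤ (i : ℝ) := by exact_mod_cast hj.2
      exact div_nonneg (by linarith) (by linarith)
    have hP : ∏ j ∈ Finset.Icc 1 i,
        (((n : ℝ) - (a : ℝ) - (j : ℝ)) / ((n : ℝ) - 2 - (j : ℝ)))
        ≤ (((n : ℝ) - (a : ℝ) + 2) / (n : ℝ)) ^ i := by
      calc ∏ j ∈ Finset.Icc 1 i,
            (((n : ℝ) - (a : ℝ) - (j : ℝ)) / ((n : ℝ) - 2 - (j : ℝ)))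
          ≤ ∏ _j ∈ Finset.Icc 1 i, (((n : ℝ) - (a : ℝ) + 2) / (n : ℝ)) := by
            apply Finset.prod_le_prod
            · intro j hj
              rw [Finset.mem_Icc] at hj
              have hj2 : (j : ℝ) ≤ (i : ℝ) := by exact_mod_cast hj.2
              exact div_nonneg (by linarith) (by linarith)
            · intro j hj
              rw [Finset.mem_Icc] at hj
              have hj1 : (1 : ℝ) ≤ (j : ℝ) := by exact_mod_cast hj.1
              have hj2 : (j : ℝ) ≤ (i : ℝ) := by exact_mod_cast hj.2
              rw [div_le_div_iff₀ (by linarith) hN0]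
              nlinarith [mul_nonneg (by linarith : (0:ℝ) ≤ (a : ℝ) - 2)
                (by linarith : (0:ℝ) ≤ (j : ℝ) + 2)]
        _ = (((n : ℝ) - (a : ℝ) + 2) / (n : ℝ)) ^ i := by
            rw [Finset.prod_const, Nat.card_Icc]; simp
    calc ((a : ℝ) / ((n : ℝ) - 1)) * (((a : ℝ) - 1) / ((n : ℝ) - 2)) *
          ∏ j ∈ Finset.Icc 1 i, (((n : ℝ) - (a : ℝ) - (j : ℝ)) / ((n : ℝ) - 2 - (j : ℝ)))
        ≤ (((a : ℝ) + 1) / (n : ℝ)) * (((a : ℝ) + 1) / (n : ℝ)) *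
          (((n : ℝ) - (a : ℝ) + 2) / (n : ℝ)) ^ i := by
          exact mul_le_mul (mul_le_mul hf1 hf2 hf2n hXn) hP hPn (mul_nonneg hXn hXn)
      _ = (((a : ℝ) + 1) / (n : ℝ)) ^ 2 * (((n : ℝ) - (a : ℝ) + 2) / (n : ℝ)) ^ i := by
          ring
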